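/- For a single letter u in a quasi-shuffle algebra, the concatenation power uⁿ equals Σ over integer partitions λ ⊢ n of (ε_λ / z_λ) · ∏_{j=1}^{ℓ(λ)} p_{λ_j}(r) · u^{⋄λ₁} ∗_r ⋯ ∗_r u^{⋄λ_{ℓ(λ)}}, where ε_λ = (−1)^{n−ℓ(λ)}, z_λ = ∏_i m_i(λ)! i^{m_i(λ)}, and p_a(r) = (1−r)^a − (−r)^a. -/

import Mathlib

/-!
Quasi-shuffle algebras (Hoffman–Ihara).  We model the span `kA` of the alphabet
(with its commutative associative product `⋄`, written `*` in `L`) as a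
non-unital commutative `k`-algebra `L`, and the word algebra `k⟨A⟩` as the
tensor algebra `TensorAlgebra k L`, in which a word `a₁⋯aₙ` is the product
`ι a₁ * ⋯ * ι aₙ`.
-/

open TensorAlgebra

variable (k : Type*) [Field k]
variable {L : Type*} [NonUnitalCommRing L] [Module k L]
  [SMulCommClass k L L] [IsScalarTower k L L]

/-- The word `a₁⋯aₙ` as an element of the tensor algebra. -/
def word (l : List L) : TensorAlgebra k L := (l.map fun a => TensorAlgebra.ι k a).prod

/-- The `⋄`-product of the letters of a nonempty block (junk value `0` on `[]`). -/
def blockProd : List L → L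
  | [] => 0
  | a :: t => t.foldl (· * ·) a

/-- Iterated product `x₁ ∗ x₂ ∗ ⋯ ∗ x_l` of a list (empty product `1`). -/
def iterProd {M : Type*} [One M] (f : M → M → M) : List M → M
  | [] => 1
  | [x] => x
  | x :: y :: t => f x (iterProd f (y :: t))

open Finsupp

section Free
variable (k : Type*) [Field k] (r : k)

/-- The free module on compositions (lists of naturals). -/
abbrev FW := List ℕ →₀ k

/-- Cons operator. -/
noncomputable def Csh (b : ℕ) : FW k →ₗ[k] FW k := Finsupp.lmapDomain k k (b :: ·)

/-- Head-merge operator. -/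
noncomputable def Hsh (m : ℕ) : FW k →ₗ[k] FW k :=
  Finsupp.lift (FW k) k (List ℕ) fun c => match c with
    | [] => 0
    | d :: t => Finsupp.single ((m + d) :: t) 1

variable {k}

/-- `x_a ∗_r (basis word c)` in the free model. -/
noncomputable def laF (a : ℕ) : List ℕ → FW k
  | [] => Finsupp.single [a] 1
  | d :: t => Finsupp.single (a :: d :: t) 1 + Csh k d (laF a t)
      + (1 - 2*r) • Finsupp.single ((a+d) :: t) 1
      + (r^2 - r) • Hsh k (a+d) (Finsupp.single t 1)

variable (k)

/-- Left `∗_r`-multiplication by `x_a`, as a linear map. -/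
noncomputable def Ash (a : ℕ) : FW k →ₗ[k] FW k := Finsupp.lift (FW k) k (List ℕ) (laF r a)

variable {k r}

@[simp] lemma Csh_single (b : ℕ) (c : List ℕ) (x : k) :
    Csh k b (Finsupp.single c x) = Finsupp.single (b :: c) x := by
  simp [Csh, Finsupp.lmapDomain_apply, Finsupp.mapDomain_single]

@[simp] lemma Hsh_single_nil (m : ℕ) (x : k) :
    Hsh k m (Finsupp.single ([] : List ℕ) x) = 0 := by
  simp [Hsh, Finsupp.lift_apply, Finsupp.sum_single_index]

@[simp] lemma Hsh_single_cons (m d : ℕ) (t : List ℕ) (x : k) :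
    Hsh k m (Finsupp.single (d :: t) x) = Finsupp.single ((m + d) :: t) x := by
  simp [Hsh, Finsupp.lift_apply, Finsupp.sum_single_index, Finsupp.smul_single]

@[simp] lemma Ash_single (a : ℕ) (c : List ℕ) :
    Ash k r a (Finsupp.single c 1) = laF r a c := by
  simp [Ash, Finsupp.lift_apply, Finsupp.sum_single_index]

end Free

section Ops
variable {k : Type*} [Field k] {r : k}

lemma Hsh_Csh (m d : ℕ) (x : FW k) : Hsh k m (Csh k d x) = Csh k (m + d) x := by
  have : (Hsh k m) ∘ₗ (Csh k d) = Csh k (m + d) := by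
    apply Finsupp.lhom_ext; intro c b; simp
  exact LinearMap.congr_fun this x

lemma Hsh_Hsh (m p : ℕ) (x : FW k) : Hsh k m (Hsh k p x) = Hsh k (m + p) x := by
  have : (Hsh k m) ∘ₗ (Hsh k p) = Hsh k (m + p) := by
    apply Finsupp.lhom_ext; intro c b
    cases c with
    | nil => simp
    | cons d t => simp [add_assoc]
  exact LinearMap.congr_fun this x

lemma Ash_Csh (a d : ℕ) (x : FW k) :
    Ash k r a (Csh k d x)
      = Csh k a (Csh k d x) + Csh k d (Ash k r a x)
        + (1 - 2*r) • Csh k (a + d) x + (r^2 - r) • Hsh k (a + d) x := by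
  have : (Ash k r a) ∘ₗ (Csh k d)
      = Csh k a ∘ₗ Csh k d + Csh k d ∘ₗ Ash k r a
        + (1 - 2*r) • Csh k (a + d) + (r^2 - r) • Hsh k (a + d) := by
    apply Finsupp.lhom_ext; intro c b
    have hb : (Finsupp.single c b : FW k) = b • Finsupp.single c 1 := by
      simp [Finsupp.smul_single]
    simp only [LinearMap.comp_apply, LinearMap.add_apply, LinearMap.smul_apply, hb, map_smul]
    simp [laF]
  exact LinearMap.congr_fun this x

lemma sym3 (a b d : ℕ) (t : List ℕ) :
    Csh k b (Hsh k (a+d) (Finsupp.single t 1)) + Hsh k (a+d) (laF r b t)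
        + Ash k r a (Hsh k (b+d) (Finsupp.single t 1))
      = Csh k a (Hsh k (b+d) (Finsupp.single t 1)) + Hsh k (b+d) (laF r a t)
        + Ash k r b (Hsh k (a+d) (Finsupp.single t 1)) := by
  cases t with
  | nil =>
      simp only [laF, Hsh_single_nil, Hsh_single_cons, map_zero, Csh_single, add_zero, zero_add]
      rw [show a + d + b = b + d + a by omega]
  | cons e t' =>
      simp only [laF, Hsh_single_nil, Hsh_single_cons, map_zero, Csh_single, Ash_single,
        map_add, map_smul, Hsh_Csh, Hsh_Hsh]
      ring_nf
      module

lemma Ash_comm_single (a b : ℕ) (c : List ℕ) :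
    Ash k r a (Ash k r b (Finsupp.single c 1)) = Ash k r b (Ash k r a (Finsupp.single c 1)) := by
  induction c with
  | nil =>
      simp only [Ash_single, laF, map_add, map_smul, Csh_single, Hsh_single_nil,
        smul_zero, add_zero]
      ring_nf
      module
  | cons d t ih =>
      simp only [Ash_single] at ih ⊢
      have h3 := sym3 (k := k) (r := r) a b d t
      simp only [laF, map_add, map_smul, Ash_single, Ash_Csh, Hsh_Csh, Hsh_Hsh,
        Csh_single, Hsh_single_cons, Hsh_single_nil, ih] 
      ring_nf at h3 ⊢
      linear_combination (norm := module) (r^2 - r) • h3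

end Ops

section MF
variable {k : Type*} [Field k] {r : k}

lemma Ash_comm (a b : ℕ) (x : FW k) :
    Ash k r a (Ash k r b x) = Ash k r b (Ash k r a x) := by
  have : (Ash k r a) ∘ₗ (Ash k r b) = (Ash k r b) ∘ₗ (Ash k r a) := by
    apply Finsupp.lhom_ext; intro c v
    have hb : (Finsupp.single c v : FW k) = v • Finsupp.single c 1 := by
      simp [Finsupp.smul_single]
    simp only [LinearMap.comp_apply, hb, map_smul]
    rw [Ash_comm_single]
  exact LinearMap.congr_fun this x

variable (k r)

/-- The free-model analogue of `iterProd mr` on single-letter blocks. -/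
noncomputable def MFsh : List ℕ → FW k
  | [] => Finsupp.single [] 1
  | j :: t => Ash k r j (MFsh t)

variable {k r}

lemma MFsh_perm {l l' : List ℕ} (h : l.Perm l') : MFsh k r l = MFsh k r l' := by
  induction h with
  | nil => rfl
  | cons x _ ih => simp [MFsh, ih]
  | swap x y l => simp [MFsh, Ash_comm]
  | trans _ _ ih1 ih2 => rw [ih1, ih2]

end MF

section Newton
variable {k : Type*} [Field k] (r : k)

/-- `q_m = (-1)^{m-1} p_m(r)` (with the convenient convention `q_0 = 0`). -/
def pq (m : ℕ) : k := (-1)^(m+1) * ((1-r)^m - (-r)^m)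

lemma pq_zero : pq r 0 = 0 := by simp [pq]

lemma pq_one : pq r 1 = 1 := by simp only [pq]; ring

lemma pq_rec (m : ℕ) : pq r (m+2) = -((1-2*r) * pq r (m+1)) - (r^2-r) * pq r m := by
  simp only [pq, pow_succ]; ring

variable {M : Type*} [AddCommGroup M] [Module k M]

lemma tele (g : ℕ → M) (N : ℕ) :
    ∑ m ∈ Finset.Icc 1 N, (pq r m • g m + ((1-2*r) * pq r m) • g (m+1)
        + ((r^2-r) * pq r m) • g (m+2))
      = pq r 1 • g 1 - pq r (N+1) • g (N+1) + ((r^2-r) * pq r N) • g (N+2) := by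
  induction N with
  | zero => simp [pq_zero]
  | succ N ih =>
      rw [Finset.sum_Icc_succ_top (by omega), ih, pq_rec]
      module

end Newton

section NewtonOnes
variable {k : Type*} [Field k] {r : k}

/-- The all-ones basis word. -/
noncomputable def ones (k : Type*) [Field k] (j : ℕ) : FW k :=
  Finsupp.single (List.replicate j 1) 1

lemma newton_ones (n : ℕ) (hn : 1 ≤ n) :
    ∑ m ∈ Finset.Icc 1 n, pq r m • Ash k r m (ones k (n - m))
      = (n : k) • ones k n := by
  induction n, hn using Nat.le_induction with
  | base =>
      simp [ones, Ash_single, laF, pq_one, List.replicate]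
  | succ n hn ih =>
      set g : ℕ → FW k := fun c =>
        if c ≤ n + 1 then Finsupp.single (c :: List.replicate (n + 1 - c) 1) 1 else 0 with hg
      have hsplit : ∀ m ∈ Finset.Icc 1 n,
          pq r m • Ash k r m (ones k (n + 1 - m))
            = pq r m • Csh k 1 (Ash k r m (ones k (n - m)))
              + (pq r m • g m + ((1-2*r) * pq r m) • g (m+1)
                  + ((r^2-r) * pq r m) • g (m+2)) := by
        intro m hm
        simp only [Finset.mem_Icc] at hm
        have h1 : n + 1 - m = (n - m) + 1 := by omega
        have hrep : List.replicate (n + 1 - m) (1:ℕ) = 1 :: List.replicate (n - m) 1 := by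
          rw [h1, List.replicate_succ]
        have hones : ones k (n + 1 - m) = Csh k 1 (ones k (n - m)) := by
          simp [ones, hrep]
        have hgm : Csh k m (Csh k 1 (ones k (n - m))) = g m := by
          rw [ones, Csh_single, Csh_single, hg]
          simp only [if_pos (by omega : m ≤ n + 1), hrep]
        have hgm1 : Csh k (m+1) (ones k (n - m)) = g (m+1) := by
          rw [ones, Csh_single, hg]
          simp only [if_pos (by omega : m + 1 ≤ n + 1)]
          rw [show n + 1 - (m + 1) = n - m by omega]
        have hHsh : Hsh k (m+1) (ones k (n - m)) = g (m+2) := by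
          rcases Nat.lt_or_ge m n with hlt | hge
          · have h2 : n - m = (n - m - 1) + 1 := by omega
            rw [hg]
            simp only [if_pos (by omega : m + 2 ≤ n + 1)]
            rw [ones, h2, List.replicate_succ, Hsh_single_cons,
              show n + 1 - (m + 2) = n - m - 1 by omega]
          · have hmn : m = n := by omega
            subst hmn
            rw [hg]
            simp only [if_neg (by omega : ¬ (m + 2 ≤ m + 1))]
            simp [ones]
        rw [hones, Ash_Csh, hHsh, hgm, hgm1]
        module
      rw [Finset.sum_Icc_succ_top (by omega : 1 ≤ n + 1)]
      rw [Finset.sum_congr rfl hsplit]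
      rw [Finset.sum_add_distrib]
      have hB : ∑ m ∈ Finset.Icc 1 n, pq r m • Csh k 1 (Ash k r m (ones k (n - m)))
          = (n : k) • ones k (n+1) := by
        have : ∀ m, pq r m • Csh k 1 (Ash k r m (ones k (n - m)))
            = Csh k 1 (pq r m • Ash k r m (ones k (n - m))) := by
          intro m; rw [map_smul]
        simp only [this]
        rw [← map_sum, ih, map_smul]
        congr 1
        rw [ones, Csh_single, ones, ← List.replicate_succ]
      rw [hB, tele]
      have hgtop : g (n+2) = 0 := by
        simp only [hg, if_neg (by omega : ¬ (n + 2 ≤ n + 1))]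
      have htop : Ash k r (n+1) (ones k 0) = g (n+1) := by
        simp only [hg, if_pos (le_refl (n+1)), Nat.sub_self]
        simp [ones, Ash_single, laF]
      have hg1 : g 1 = ones k (n+1) := by
        simp only [hg, if_pos (by omega : 1 ≤ n + 1)]
        rw [ones, ← List.replicate_succ, show n + 1 - 1 = n by omega]
      rw [Nat.sub_self, hgtop, htop, hg1, pq_one, one_smul]
      push_cast
      module

end NewtonOnes

section Part
variable {k : Type*} [Field k] {r : k}

/-- `p_j(r) = (1-r)^j - (-r)^j`. -/
noncomputable def pfun (r : k) (j : ℕ) : k := (1-r)^j - (-r)^j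

/-- `z_λ`. -/
def znat (s : Multiset ℕ) : ℕ := ∏ i ∈ s.toFinset, (s.count i).factorial * i ^ (s.count i)

/-- The coefficient `ε_λ/z_λ · Π_j p_{λ_j}(r)`. -/
noncomputable def wc (r : k) (s : Multiset ℕ) : k :=
  ((-1 : k)^(s.sum - Multiset.card s) / (znat s : k)) * ((s.map (pfun r)).prod)

lemma pq_eq (m : ℕ) : pq r m = (-1 : k)^(m+1) * pfun r m := rfl

lemma card_le_sum_pos {s : Multiset ℕ} (h : ∀ i ∈ s, 0 < i) : Multiset.card s ≤ s.sum := by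
  induction s using Multiset.induction with
  | empty => simp
  | cons a t ih =>
      simp only [Multiset.card_cons, Multiset.sum_cons]
      have ha := h a (Multiset.mem_cons_self a t)
      have := ih (fun i hi => h i (Multiset.mem_cons_of_mem hi))
      omega

lemma znat_pos {s : Multiset ℕ} (h : ∀ i ∈ s, 0 < i) : 0 < znat s := by
  unfold znat
  apply Finset.prod_pos
  intro i hi
  exact Nat.mul_pos (Nat.factorial_pos _) (pow_pos (h i (Multiset.mem_toFinset.1 hi)) _)

lemma znat_cons (m : ℕ) (t : Multiset ℕ) :
    znat (m ::ₘ t) = (m * (t.count m + 1)) * znat t := by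
  classical
  unfold znat
  by_cases hm : m ∈ t
  · have hmem : m ∈ t.toFinset := Multiset.mem_toFinset.2 hm
    have hfin : (m ::ₘ t).toFinset = t.toFinset := by
      rw [Multiset.toFinset_cons, Finset.insert_eq_self.2 hmem]
    rw [hfin, ← Finset.mul_prod_erase _ _ hmem, ← Finset.mul_prod_erase _ _ hmem]
    have hrest : ∏ i ∈ t.toFinset.erase m, ((m ::ₘ t).count i).factorial * i ^ ((m ::ₘ t).count i)
        = ∏ i ∈ t.toFinset.erase m, (t.count i).factorial * i ^ (t.count i) := by
      apply Finset.prod_congr rfl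
      intro i hi
      rw [Multiset.count_cons_of_ne (Finset.ne_of_mem_erase hi)]
    rw [hrest, Multiset.count_cons_self, Nat.factorial_succ, pow_succ]
    ring
  · have hnm : m ∉ t.toFinset := by simp [hm]
    rw [Multiset.toFinset_cons, Finset.prod_insert hnm]
    have hc0 : t.count m = 0 := Multiset.count_eq_zero.2 hm
    have hrest : ∏ i ∈ t.toFinset, ((m ::ₘ t).count i).factorial * i ^ ((m ::ₘ t).count i)
        = znat t := by
      apply Finset.prod_congr rfl
      intro i hi
      rw [Multiset.count_cons_of_ne]
      rintro rfl; exact hm (Multiset.mem_toFinset.1 hi)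
    rw [hrest, Multiset.count_cons_self, hc0]
    simp [Nat.factorial, znat]

variable [CharZero k]

lemma wc_cons {m : ℕ} (hm : 0 < m) {t : Multiset ℕ} (ht : ∀ i ∈ t, 0 < i) :
    pq r m * wc r t = ((m * (t.count m + 1) : ℕ) : k) * wc r (m ::ₘ t) := by
  have hcard : Multiset.card t ≤ t.sum := card_le_sum_pos ht
  have hz : ((znat t : ℕ) : k) ≠ 0 := Nat.cast_ne_zero.2 (znat_pos ht).ne'
  have hzc : ((m * (t.count m + 1) : ℕ) : k) ≠ 0 :=
    Nat.cast_ne_zero.2 (Nat.mul_pos hm (Nat.succ_pos _)).ne'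
  have hexp : m + t.sum - (Multiset.card t + 1) = (m - 1) + (t.sum - Multiset.card t) := by omega
  have hm1 : (-1 : k)^((m - 1) : ℕ) = (-1 : k)^(m + 1) := by
    rw [show m + 1 = (m - 1) + 2 by omega, pow_add]
    simp
  have hsign : (-1 : k)^(m + t.sum - (Multiset.card t + 1))
      = (-1 : k)^(m+1) * (-1 : k)^(t.sum - Multiset.card t) := by
    rw [hexp, pow_add, hm1]
  unfold pq wc
  rw [Multiset.sum_cons, Multiset.card_cons, Multiset.map_cons, Multiset.prod_cons, znat_cons,
    hsign, Nat.cast_mul]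
  have hm0 : (m : k) ≠ 0 := Nat.cast_ne_zero.2 hm.ne'
  have hcnt : ((t.count m : k) + 1) ≠ 0 := Nat.cast_add_one_ne_zero _
  simp only [pfun]
  push_cast
  field_simp [hz, hm0, hcnt]

variable (k r)

/-- The free-model version of the right-hand side. -/
noncomputable def TF (n : ℕ) : FW k :=
  ∑ P : n.Partition, wc r P.parts • MFsh k r (P.parts.sort (·≤·))

variable {k r}

/-- Construct a partition of `n` by adding a part `m` to a partition of `n - m`. -/
def consPart {n m : ℕ} (hm1 : 1 ≤ m) (hmn : m ≤ n) (Q : (n - m).Partition) : n.Partition where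
  parts := m ::ₘ Q.parts
  parts_pos := by
    intro i hi
    rcases Multiset.mem_cons.1 hi with rfl | h
    · exact hm1
    · exact Q.parts_pos h
  parts_sum := by rw [Multiset.sum_cons, Q.parts_sum]; omega

/-- Remove a part `m` from a partition of `n`. -/
def erasePart {n : ℕ} (P : n.Partition) (m : ℕ) (hm : m ∈ P.parts) : (n - m).Partition where
  parts := P.parts.erase m
  parts_pos := fun hi => P.parts_pos (Multiset.mem_of_mem_erase hi)
  parts_sum := by
    have h2 : m + (P.parts.erase m).sum = P.parts.sum := by
      rw [← Multiset.sum_cons, Multiset.cons_erase hm]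
    have h3 := P.parts_sum
    omega

@[simp] lemma consPart_parts {n m : ℕ} (hm1 : 1 ≤ m) (hmn : m ≤ n) (Q : (n - m).Partition) :
    (consPart hm1 hmn Q).parts = m ::ₘ Q.parts := rfl

@[simp] lemma erasePart_parts {n : ℕ} (P : n.Partition) (m : ℕ) (hm : m ∈ P.parts) :
    (erasePart P m hm).parts = P.parts.erase m := rfl

lemma mem_le_sum {s : Multiset ℕ} {m : ℕ} (hm : m ∈ s) : m ≤ s.sum := by
  have h2 : m + (s.erase m).sum = s.sum := by
    rw [← Multiset.sum_cons, Multiset.cons_erase hm]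
  omega

lemma newton_TF (n : ℕ) (hn : 1 ≤ n) :
    (n : k) • TF k r n = ∑ m ∈ Finset.Icc 1 n, pq r m • Ash k r m (TF k r (n - m)) := by
  classical
  have hrhs : ∀ m ∈ Finset.Icc 1 n,
      pq r m • Ash k r m (TF k r (n - m))
        = ∑ Q : (n - m).Partition,
            (pq r m * wc r Q.parts) • MFsh k r ((m ::ₘ Q.parts).sort (·≤·)) := by
    intro m hm
    rw [TF, map_sum, Finset.smul_sum]
    apply Finset.sum_congr rfl
    intro Q _
    rw [map_smul, smul_smul]
    congr 1
    have h1 : Ash k r m (MFsh k r (Q.parts.sort (·≤·)))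
        = MFsh k r (m :: Q.parts.sort (·≤·)) := rfl
    rw [h1]
    apply MFsh_perm
    exact Multiset.coe_eq_coe.mp (by rw [← Multiset.cons_coe, Multiset.sort_eq, Multiset.sort_eq])
  rw [Finset.sum_congr rfl hrhs]
  rw [Finset.sum_sigma']
  have hbij :
      ∑ x ∈ (Finset.Icc 1 n).sigma (fun m => (Finset.univ : Finset ((n - m).Partition))),
          (pq r x.1 * wc r x.2.parts) • MFsh k r ((x.1 ::ₘ x.2.parts).sort (·≤·))
        = ∑ y ∈ (Finset.univ : Finset (n.Partition)).sigma (fun P => P.parts.toFinset),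
            (((y.2 * y.1.parts.count y.2 : ℕ) : k) * wc r y.1.parts)
              • MFsh k r (y.1.parts.sort (·≤·)) := by
    refine Finset.sum_bij'
      (fun x hx => (⟨consPart
          ((Finset.mem_Icc.1 (Finset.mem_sigma.1 hx).1).1)
          ((Finset.mem_Icc.1 (Finset.mem_sigma.1 hx).1).2) x.2, x.1⟩ :
            (P : n.Partition) × ℕ))
      (fun y hy => ⟨y.2, erasePart y.1 y.2
          (Multiset.mem_toFinset.1 (Finset.mem_sigma.1 hy).2)⟩) ?_ ?_ ?_ ?_ ?_
    · intro x hx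
      simp only [Finset.mem_sigma, Finset.mem_univ, true_and]
      simp [consPart]
    · intro y hy
      have hmem := Multiset.mem_toFinset.1 (Finset.mem_sigma.1 hy).2
      simp only [Finset.mem_sigma, Finset.mem_univ, and_true, Finset.mem_Icc]
      exact ⟨y.1.parts_pos hmem, le_trans (mem_le_sum hmem) (le_of_eq y.1.parts_sum)⟩
    · intro x hx
      rcases x with ⟨m, Q⟩
      simp only [Sigma.mk.inj_iff, heq_eq_eq, true_and]
      apply Nat.Partition.ext
      simp
    · intro y hy
      rcases y with ⟨P, m⟩
      have hmem := Multiset.mem_toFinset.1 (Finset.mem_sigma.1 hy).2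
      simp only [Sigma.mk.inj_iff, heq_eq_eq, and_true]
      apply Nat.Partition.ext
      simp [Multiset.cons_erase hmem]
    · intro x hx
      rcases x with ⟨m, Q⟩
      have hm1 : 1 ≤ m := (Finset.mem_Icc.1 (Finset.mem_sigma.1 hx).1).1
      have hQpos : ∀ i ∈ Q.parts, 0 < i := fun i hi => Q.parts_pos hi
      dsimp only
      simp only [consPart_parts]
      rw [wc_cons hm1 hQpos, Multiset.count_cons_self]
  rw [hbij, Finset.sum_sigma, TF, Finset.smul_sum]
  apply Finset.sum_congr rfl
  intro P _
  dsimp only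
  rw [← Finset.sum_smul, smul_smul]
  congr 1
  rw [← Finset.sum_mul]
  congr 1
  have hc : ∀ m ∈ P.parts.toFinset,
      ((m * P.parts.count m : ℕ) : k) = ((P.parts.count m * m : ℕ) : k) := by
    intro m _; rw [Nat.mul_comm]
  rw [Finset.sum_congr rfl hc, ← Nat.cast_sum]
  have h := Finset.sum_multiset_map_count P.parts (id : ℕ → ℕ)
  simp only [Multiset.map_id', Multiset.map_id, smul_eq_mul, id_eq] at h
  rw [← h]
  exact congrArg _ P.parts_sum.symm

end Part

section Main
variable {k : Type*} [Field k] [CharZero k] {r : k}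

lemma TF_eq_ones (n : ℕ) : TF k r n = ones k n := by
  induction n using Nat.strong_induction_on with
  | _ n ih =>
    rcases Nat.eq_zero_or_pos n with rfl | hn
    · rw [TF, Finset.univ_unique, Finset.sum_singleton]
      have h0 : (default : Nat.Partition 0).parts = 0 := Nat.Partition.partition_zero_parts _
      rw [h0]
      simp [wc, znat, MFsh, ones]
    · have h1 : (n:k) ≠ 0 := Nat.cast_ne_zero.2 hn.ne'
      refine smul_right_injective (FW k) h1 ?_
      show (n:k) • TF k r n = (n:k) • ones k n
      rw [newton_TF n hn]
      have hcong : ∀ m ∈ Finset.Icc 1 n, pq r m • Ash k r m (TF k r (n - m))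
          = pq r m • Ash k r m (ones k (n - m)) := by
        intro m hm
        simp only [Finset.mem_Icc] at hm
        rw [ih _ (by omega)]
      rw [Finset.sum_congr rfl hcong, newton_ones n hn]

end Main

section Transfer

variable {k : Type*} [Field k]
variable {L : Type*} [NonUnitalCommRing L] [Module k L]
  [SMulCommClass k L L] [IsScalarTower k L L]

lemma word_nil : word k ([] : List L) = 1 := rfl

lemma word_cons (a : L) (v : List L) : word k (a :: v) = TensorAlgebra.ι k a * word k v := by
  simp [word]

lemma word_singleton (a : L) : word k [a] = TensorAlgebra.ι k a := by
  simp [word]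

lemma foldl_rep (u : L) : ∀ (j : ℕ) (x : L),
    List.foldl (· * ·) x (List.replicate (j+1) u) = List.foldl (· * ·) x (List.replicate j u) * u
  | 0, x => by simp
  | (j+1), x => by
      rw [List.replicate_succ, List.foldl_cons, foldl_rep u j (x * u)]
      rw [show List.replicate (j+1) u = u :: List.replicate j u from List.replicate_succ .. ]
      rw [List.foldl_cons]

lemma blockProd_rep_succ (u : L) (m : ℕ) (hm : 0 < m) :
    blockProd (List.replicate (m+1) u) = blockProd (List.replicate m u) * u := by
  obtain ⟨j, rfl⟩ : ∃ j, m = j + 1 := ⟨m - 1, by omega⟩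
  rw [List.replicate_succ, List.replicate_succ (n := j)]
  simp only [blockProd]
  exact foldl_rep u j u

lemma blockProd_rep_add (u : L) (a b : ℕ) (ha : 0 < a) (hb : 0 < b) :
    blockProd (List.replicate (a + b) u)
      = blockProd (List.replicate a u) * blockProd (List.replicate b u) := by
  induction b with
  | zero => omega
  | succ b ih =>
      rcases Nat.eq_zero_or_pos b with rfl | hb'
      · rw [blockProd_rep_succ u a ha]
        rfl
      · rw [show a + (b+1) = (a+b) + 1 by omega, blockProd_rep_succ u (a+b) (by omega),
          ih hb', blockProd_rep_succ u b hb', mul_assoc]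

end Transfer


/--
For a single letter `u`,
`uⁿ = Σ_{λ⊢n} (ε_λ/z_λ) Π_j p_{λ_j}(r) · u^{⋄λ₁} ∗_r ⋯ ∗_r u^{⋄λ_{ℓ(λ)}}`,
where `ε_λ = (−1)^{n−ℓ(λ)}`, `z_λ = Π_i m_i(λ)! i^{m_i(λ)}`, and
`p_a(r) = (1−r)^a − (−r)^a`.  Here `uⁿ` is the word of `n` copies of `u`,
`u^{⋄m} = blockProd` of `m` copies of `u`, and `mr = ∗_r` is the interpolated
product, given by its recursion (with `D a` the first-letter `⋄`-action).
-/
theorem stmt17 [CharZero k] (r : k) (n : ℕ) (u : L)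
    (D : L → TensorAlgebra k L →ₗ[k] TensorAlgebra k L)
    (hD1 : ∀ a : L, D a 1 = 0)
    (hDw : ∀ (a c : L) (v : List L),
      D a (TensorAlgebra.ι k c * word k v) = TensorAlgebra.ι k (a * c) * word k v)
    (mr : TensorAlgebra k L →ₗ[k] TensorAlgebra k L →ₗ[k] TensorAlgebra k L)
    (hmrl : ∀ x, mr 1 x = x) (hmrr : ∀ x, mr x 1 = x)
    (hmrrec : ∀ (a b : L) (v w : List L),
      mr (word k (a :: v)) (word k (b :: w))
        = TensorAlgebra.ι k a * mr (word k v) (word k (b :: w))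
          + TensorAlgebra.ι k b * mr (word k (a :: v)) (word k w)
          + (1 - 2 * r) • (TensorAlgebra.ι k (a * b) * mr (word k v) (word k w))
          + (r ^ 2 - r) • D (a * b) (mr (word k v) (word k w))) :
    word k (List.replicate n u)
      = ∑ P : n.Partition,
          (((-1 : k) ^ (n - P.parts.card)
              / ((∏ i ∈ P.parts.toFinset,
                  (P.parts.count i).factorial * i ^ (P.parts.count i) : ℕ) : k))
            * (P.parts.map fun j => (1 - r) ^ j - (-r) ^ j).prod)
            • iterProd (fun x y => mr x y)
                ((P.parts.sort (· ≤ ·)).map fun j =>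
                  TensorAlgebra.ι k (blockProd (List.replicate j u))) := by
  classical
  set ub : ℕ → L := fun m => blockProd (List.replicate m u) with hub
  set Φ : FW k →ₗ[k] TensorAlgebra k L :=
    Finsupp.lift (TensorAlgebra k L) k (List ℕ) (fun c => word k (c.map ub)) with hΦ
  have hphi_single : ∀ c : List ℕ, Φ (Finsupp.single c 1) = word k (c.map ub) := by
    intro c
    simp [hΦ, Finsupp.lift_apply, Finsupp.sum_single_index]
  have hub_add : ∀ a b : ℕ, 0 < a → 0 < b → ub (a+b) = ub a * ub b :=
    fun a b ha hb => blockProd_rep_add u a b ha hb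
  have hphi_C : ∀ (b : ℕ) (x : FW k), Φ (Csh k b x) = TensorAlgebra.ι k (ub b) * Φ x := by
    intro b x
    have hone : Φ ∘ₗ Csh k b = (LinearMap.mulLeft k (TensorAlgebra.ι k (ub b))) ∘ₗ Φ := by
      apply Finsupp.lhom_ext
      intro c v
      have hb1 : (Finsupp.single c v : FW k) = v • Finsupp.single c 1 := by simp
      simp only [LinearMap.comp_apply, hb1, map_smul, LinearMap.mulLeft_apply, Csh_single]
      rw [hphi_single, hphi_single, List.map_cons, word_cons]
    exact LinearMap.congr_fun hone x
  have hphi_H : ∀ (m : ℕ), 0 < m → ∀ (c : List ℕ), (∀ i ∈ c, 0 < i) →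
      Φ (Hsh k m (Finsupp.single c 1)) = D (ub m) (Φ (Finsupp.single c 1)) := by
    intro m hm c hc
    cases c with
    | nil =>
        rw [Hsh_single_nil, map_zero, hphi_single]
        exact (hD1 _).symm
    | cons d t =>
        rw [Hsh_single_cons, hphi_single, hphi_single]
        simp only [List.map_cons]
        rw [word_cons, word_cons, hub_add m d hm (hc d (by simp)), hDw]
  have hphi_la : ∀ (c : List ℕ), (∀ i ∈ c, 0 < i) → ∀ (a : ℕ), 0 < a →
      Φ (laF r a c) = mr (word k [ub a]) (Φ (Finsupp.single c 1)) := by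
    intro c
    induction c with
    | nil =>
        intro _ a _
        rw [show laF (k := k) r a [] = Finsupp.single [a] 1 from rfl]
        rw [hphi_single, hphi_single, List.map_nil, word_nil, hmrr, List.map_cons, List.map_nil]
    | cons d t ih =>
        intro hpos a ha
        have hdpos : 0 < d := hpos d (by simp)
        have htpos : ∀ i ∈ t, 0 < i := fun i hi => hpos i (by simp [hi])
        have hR : mr (word k [ub a]) (Φ (Finsupp.single (d :: t) 1))
            = TensorAlgebra.ι k (ub a) * word k (ub d :: t.map ub)
              + TensorAlgebra.ι k (ub d) * mr (word k [ub a]) (word k (t.map ub))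
              + (1 - 2*r) • (TensorAlgebra.ι k (ub (a+d)) * word k (t.map ub))
              + (r^2 - r) • D (ub (a+d)) (word k (t.map ub)) := by
          rw [hphi_single, List.map_cons]
          rw [hmrrec (ub a) (ub d) [] (t.map ub)]
          rw [word_nil, hmrl, hmrl, ← hub_add a d ha hdpos]
        rw [hR]
        rw [show laF (k := k) r a (d :: t) = Finsupp.single (a :: d :: t) 1 + Csh k d (laF r a t)
            + (1 - 2*r) • Finsupp.single ((a+d) :: t) 1
            + (r^2 - r) • Hsh k (a+d) (Finsupp.single t 1) from rfl]
        rw [map_add, map_add, map_add, map_smul, map_smul]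
        rw [hphi_single, hphi_C, ih htpos a ha, hphi_single,
          hphi_H (a+d) (by omega) t htpos, hphi_single]
        simp only [List.map_cons]
        rw [word_cons (ub a), word_cons (ub (a+d)), hphi_single]
  set PosSet : Set (FW k) :=
    {x | ∃ c : List ℕ, (∀ i ∈ c, 0 < i) ∧ x = Finsupp.single c 1} with hPosSet
  set PosS : Submodule k (FW k) := Submodule.span k PosSet with hPosS
  have hgen : ∀ c : List ℕ, (∀ i ∈ c, 0 < i) → (Finsupp.single c 1 : FW k) ∈ PosS := by
    intro c hc
    exact Submodule.subset_span ⟨c, hc, rfl⟩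
  have hC_mem : ∀ (d : ℕ), 0 < d → ∀ x ∈ PosS, Csh k d x ∈ PosS := by
    intro d hd x hx
    refine Submodule.span_induction ?_ ?_ ?_ ?_ hx
    · rintro y ⟨c, hc, rfl⟩
      rw [Csh_single]
      refine hgen _ ?_
      intro i hi
      rcases List.mem_cons.1 hi with rfl | hi'
      · exact hd
      · exact hc i hi'
    · rw [map_zero]; exact zero_mem _
    · intro y z _ _ hy hz; rw [map_add]; exact add_mem hy hz
    · intro a y _ hy; rw [map_smul]; exact Submodule.smul_mem _ _ hy
  have hH_mem : ∀ (m : ℕ), 0 < m → ∀ (c : List ℕ), (∀ i ∈ c, 0 < i) →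
      Hsh k m (Finsupp.single c 1) ∈ PosS := by
    intro m hm c hc
    cases c with
    | nil => rw [Hsh_single_nil]; exact zero_mem _
    | cons d t =>
        rw [Hsh_single_cons]
        refine hgen _ ?_
        intro i hi
        rcases List.mem_cons.1 hi with rfl | hi'
        · omega
        · exact hc i (by simp [hi'])
  have hla_mem : ∀ (c : List ℕ), (∀ i ∈ c, 0 < i) → ∀ (a : ℕ), 0 < a →
      laF (k := k) r a c ∈ PosS := by
    intro c
    induction c with
    | nil =>
        intro _ a ha
        exact hgen [a] (by intro i hi; simp at hi; omega)
    | cons d t ih =>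
        intro hpos a ha
        have hdpos : 0 < d := hpos d (by simp)
        have htpos : ∀ i ∈ t, 0 < i := fun i hi => hpos i (by simp [hi])
        rw [show laF (k := k) r a (d :: t) = Finsupp.single (a :: d :: t) 1 + Csh k d (laF r a t)
            + (1 - 2*r) • Finsupp.single ((a+d) :: t) 1
            + (r^2 - r) • Hsh k (a+d) (Finsupp.single t 1) from rfl]
        refine add_mem (add_mem (add_mem ?_ ?_) ?_) ?_
        · refine hgen _ ?_
          intro i hi
          rcases List.mem_cons.1 hi with rfl | hi'
          · exact ha
          · exact hpos i hi'
        · exact hC_mem d hdpos _ (ih htpos a ha)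
        · refine Submodule.smul_mem _ _ (hgen _ ?_)
          intro i hi
          rcases List.mem_cons.1 hi with rfl | hi'
          · omega
          · exact htpos i hi'
        · exact Submodule.smul_mem _ _ (hH_mem (a+d) (by omega) t htpos)
  have hAsh_mem : ∀ (a : ℕ), 0 < a → ∀ x ∈ PosS, Ash k r a x ∈ PosS := by
    intro a ha x hx
    refine Submodule.span_induction ?_ ?_ ?_ ?_ hx
    · rintro y ⟨c, hc, rfl⟩
      rw [Ash_single]
      exact hla_mem c hc a ha
    · rw [map_zero]; exact zero_mem _
    · intro y z _ _ hy hz; rw [map_add]; exact add_mem hy hz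
    · intro b y _ hy; rw [map_smul]; exact Submodule.smul_mem _ _ hy
  have hMF_mem : ∀ l : List ℕ, (∀ i ∈ l, 0 < i) → MFsh k r l ∈ PosS := by
    intro l
    induction l with
    | nil => intro _; exact hgen [] (by simp)
    | cons j t ih =>
        intro hpos
        exact hAsh_mem j (hpos j (by simp)) _ (ih (fun i hi => hpos i (by simp [hi])))
  have hphi_Ash : ∀ (a : ℕ), 0 < a → ∀ x ∈ PosS,
      Φ (Ash k r a x) = mr (word k [ub a]) (Φ x) := by
    intro a ha x hx
    refine Submodule.span_induction ?_ ?_ ?_ ?_ hx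
    · rintro y ⟨c, hc, rfl⟩
      rw [Ash_single]
      exact hphi_la c hc a ha
    · rw [map_zero, map_zero, map_zero]
    · intro y z _ _ hy hz; simp only [map_add, hy, hz]
    · intro b y _ hy; simp only [map_smul, hy]
  have hphi_MF : ∀ l : List ℕ, (∀ i ∈ l, 0 < i) →
      Φ (MFsh k r l)
        = iterProd (fun x y => mr x y) (l.map fun j => TensorAlgebra.ι k (ub j)) := by
    intro l
    induction l with
    | nil =>
        intro _
        rw [show MFsh k r [] = Finsupp.single [] 1 from rfl, hphi_single]
        rfl
    | cons j t ih =>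
        intro hpos
        have hj : 0 < j := hpos j (by simp)
        have ht : ∀ i ∈ t, 0 < i := fun i hi => hpos i (by simp [hi])
        rw [show MFsh k r (j :: t) = Ash k r j (MFsh k r t) from rfl]
        rw [hphi_Ash j hj _ (hMF_mem t ht), ih ht]
        cases t with
        | nil =>
            simp only [List.map_nil, List.map_cons]
            rw [show iterProd (fun x y => mr x y) ([] : List (TensorAlgebra k L)) = 1 from rfl]
            rw [hmrr, word_singleton]
            rfl
        | cons e t' =>
            simp only [List.map_cons]
            rw [word_singleton]
            rfl
  have key : TF k r n = ones k n := TF_eq_ones n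
  have hw : ∀ P : n.Partition, wc r P.parts
      = (((-1 : k) ^ (n - P.parts.card)
          / ((∏ i ∈ P.parts.toFinset,
              (P.parts.count i).factorial * i ^ (P.parts.count i) : ℕ) : k))
        * (P.parts.map fun j => (1 - r) ^ j - (-r) ^ j).prod) := by
    intro P
    unfold wc znat pfun
    rw [P.parts_sum]
  calc word k (List.replicate n u)
      = Φ (ones k n) := by
        rw [ones, hphi_single, List.map_replicate]
        congr 1
    _ = Φ (TF k r n) := by rw [key]
    _ = _ := by
        rw [TF, map_sum]
        apply Finset.sum_congr rfl
        intro P _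
        rw [map_smul, hphi_MF _ (fun j hj => P.parts_pos (Multiset.mem_sort (α := ℕ) (· ≤ ·) |>.1 hj)), hw P]
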